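/- Let u : F ⥤ G be a cartesian functor between Grothendieck fibrations over E. Then u is a trivial fibration (i.e., both an equivalence of categories and an isofibration) if and only if for every object S of E the induced functor u_S : F_S ⥤ G_S is a surjective equivalence. -/

import Mathlib

open CategoryTheory CategoryTheory.Limits CategoryTheory.Functor

universe w₁ w₂ w₃ w₄ v₁ v₂ v₃ v₄

namespace PaperStacks

/-- A functor `p : A ⥤ B` is an isofibration if every isomorphism `f : p.obj a ≅ b` in `B`
lifts to an isomorphism `e : a ≅ a'` in `A` with `p.obj a' = b` and `p.map e.hom = f.hom`
(up to the identification `p.obj a' = b`). -/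
def IsIsofibration {A : Type w₁} {B : Type w₂} [Category.{v₁} A] [Category.{v₂} B]
    (p : A ⥤ B) : Prop :=
  ∀ (a : A) (b : B) (f : p.obj a ≅ b), ∃ (a' : A) (e : a ≅ a') (h : p.obj a' = b),
    p.map e.hom = f.hom ≫ eqToHom h.symm

/-- A surjective equivalence: an equivalence of categories that is surjective on objects. -/
def IsSurjectiveEquivalence {A : Type w₁} {B : Type w₂} [Category.{v₁} A] [Category.{v₂} B]
    (p : A ⥤ B) : Prop :=
  p.IsEquivalence ∧ Function.Surjective p.obj

/-- The functor induced on fibre categories by a functor `u : F ⥤ G` over `E`. -/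
def fiberMap {E : Type w₁} {F : Type w₂} {G : Type w₃}
    [Category.{v₁} E] [Category.{v₂} F] [Category.{v₃} G]
    {p : F ⥤ E} {q : G ⥤ E} (u : F ⥤ G) (h : u ⋙ q = p) (S : E) :
    Functor.Fiber p S ⥤ Functor.Fiber q S :=
  Functor.Fiber.inducedFunctor (F := Functor.Fiber.fiberInclusion ⋙ u)
    (by rw [Functor.assoc, h]; exact Functor.Fiber.fiberInclusion_comp_eq_const)

section Aux

variable {E : Type w₁} {F : Type w₂} {G : Type w₃}
    [Category.{v₁} E] [Category.{v₂} F] [Category.{v₃} G]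
    {q : G ⥤ E} (u : F ⥤ G)

lemma homLift_comp_iff {R S : E} {a b : F} (f : R ⟶ S) (φ : a ⟶ b) :
    (u ⋙ q).IsHomLift f φ ↔ q.IsHomLift f (u.map φ) := by
  constructor
  · intro h
    exact IsHomLift.of_fac' q f (u.map φ) (IsHomLift.domain_eq (u ⋙ q) f φ)
      (IsHomLift.codomain_eq (u ⋙ q) f φ) (IsHomLift.fac' (u ⋙ q) f φ)
  · intro h
    exact IsHomLift.of_fac' (u ⋙ q) f φ (IsHomLift.domain_eq q f (u.map φ))
      (IsHomLift.codomain_eq q f (u.map φ)) (IsHomLift.fac' q f (u.map φ))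

lemma fiber_isIso {𝒮 : Type*} {𝒳 : Type*} [Category 𝒮] [Category 𝒳] {p : 𝒳 ⥤ 𝒮} {S : 𝒮}
    {a b : Functor.Fiber p S} (φ : a ⟶ b)
    (hφ : IsIso (Functor.Fiber.fiberInclusion.map φ)) : IsIso φ := by
  haveI := φ.2
  haveI : IsIso φ.1 := hφ
  refine ⟨⟨⟨inv φ.1, IsHomLift.lift_id_inv_isIso p S φ.1⟩, ?_, ?_⟩⟩
  · apply Functor.Fiber.hom_ext
    show φ.1 ≫ inv φ.1 = 𝟙 _
    simp
  · apply Functor.Fiber.hom_ext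
    show inv φ.1 ≫ φ.1 = 𝟙 _
    simp

end Aux

/-- A cartesian functor `u : F ⥤ G` between Grothendieck fibrations over
`E` is a trivial fibration (an equivalence of categories and an isofibration) if and
only if all the induced functors on fibre categories are surjective equivalences. -/
theorem trivialFibration_iff_fiberwise_surjective_equivalence
    {E : Type w₁} {F : Type w₂} {G : Type w₃}
    [Category.{v₁} E] [Category.{v₂} F] [Category.{v₃} G]
    {p : F ⥤ E} {q : G ⥤ E} (u : F ⥤ G) (hu : u ⋙ q = p)
    (hp : p.IsFibered) (hq : q.IsFibered)
    (hcart : ∀ ⦃a b : F⦄ (φ : a ⟶ b) ⦃R S : E⦄ (f : R ⟶ S),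
      p.IsStronglyCartesian f φ → q.IsStronglyCartesian f (u.map φ)) :
    (u.IsEquivalence ∧ IsIsofibration u) ↔
      ∀ S : E, IsSurjectiveEquivalence (fiberMap u hu S) := by
  subst hu
  haveI := hp; haveI := hq
  constructor
  · rintro ⟨hequiv, hiso⟩ S
    haveI := hequiv
    have hsurj : Function.Surjective (fiberMap (q := q) u rfl S).obj := by
      rintro ⟨b, hb⟩
      obtain ⟨a', e, h, -⟩ := hiso (u.objPreimage b) b (u.objObjPreimageIso b)
      exact ⟨⟨a', by rw [Functor.comp_obj, h]; exact hb⟩, Subtype.ext h⟩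
    refine ⟨⟨?_, ?_, ?_⟩, hsurj⟩
    · constructor
      intro a b φ ψ h
      apply Functor.Fiber.hom_ext
      apply u.map_injective
      exact congrArg Subtype.val h
    · constructor
      intro a b ψ
      obtain ⟨φ, hφ⟩ := u.map_surjective ψ.1
      have hl : q.IsHomLift (𝟙 S) (u.map φ) := hφ ▸ ψ.2
      have : (u ⋙ q).IsHomLift (𝟙 S) φ := (homLift_comp_iff u _ _).mpr hl
      exact ⟨⟨φ, this⟩, Functor.Fiber.hom_ext hφ⟩
    · exact ⟨fun Y => ⟨(hsurj Y).choose, ⟨eqToIso (hsurj Y).choose_spec⟩⟩⟩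
  · intro h
    have usurj : Function.Surjective u.obj := by
      intro b
      obtain ⟨⟨a, ha⟩, hab⟩ := (h (q.obj b)).2 ⟨b, rfl⟩
      exact ⟨a, congrArg Subtype.val hab⟩
    have ufaith : u.Faithful := by
      constructor
      intro a b φ ψ hφψ
      set R := (u ⋙ q).obj a
      set f := (u ⋙ q).map φ with hf
      obtain ⟨a', χ, hχ⟩ := Functor.IsPreFibered.exists_isCartesian' f
      haveI : (u ⋙ q).IsStronglyCartesian f χ := inferInstance
      haveI : q.IsStronglyCartesian f (u.map χ) := hcart χ f inferInstance
      haveI hψl : (u ⋙ q).IsHomLift f ψ := by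
        rw [show f = (u ⋙ q).map ψ from congrArg q.map hφψ]; infer_instance
      set τφ := Functor.IsStronglyCartesian.map (u ⋙ q) f χ
        (g := 𝟙 R) (Category.id_comp f).symm φ with hτφ
      set τψ := Functor.IsStronglyCartesian.map (u ⋙ q) f χ
        (g := 𝟙 R) (Category.id_comp f).symm ψ with hτψ
      haveI : q.IsHomLift (𝟙 R) (u.map τφ) := (homLift_comp_iff u _ _).mp inferInstance
      haveI : q.IsHomLift (𝟙 R) (u.map τψ) := (homLift_comp_iff u _ _).mp inferInstance
      have huτ : u.map τφ = u.map τψ := by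
        apply Functor.IsStronglyCartesian.ext q f (u.map χ) (𝟙 R)
        rw [← Functor.map_comp, ← Functor.map_comp,
          Functor.IsStronglyCartesian.fac, Functor.IsStronglyCartesian.fac, hφψ]
      have hττ : τφ = τψ := by
        have hd : (u ⋙ q).obj a' = R := IsHomLift.domain_eq (u ⋙ q) f χ
        have := (h R).1.faithful (F := fiberMap (q := q) u rfl R)
        have heq : (fiberMap (q := q) u rfl R).map (X := ⟨a, rfl⟩) (Y := ⟨a', hd⟩) ⟨τφ, inferInstance⟩ =
            (fiberMap (q := q) u rfl R).map ⟨τψ, inferInstance⟩ := Functor.Fiber.hom_ext huτ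
        exact congrArg Subtype.val (this.map_injective heq)
      rw [← Functor.IsStronglyCartesian.fac (u ⋙ q) f χ (g := 𝟙 R) (Category.id_comp f).symm φ,
        ← Functor.IsStronglyCartesian.fac (u ⋙ q) f χ (g := 𝟙 R) (Category.id_comp f).symm ψ]
      rw [← hτφ, ← hτψ, hττ]
    have ufull : u.Full := by
      constructor
      intro a b ψ
      set R := (u ⋙ q).obj a
      set f : R ⟶ (u ⋙ q).obj b := q.map ψ with hf
      obtain ⟨a', χ, hχ⟩ := Functor.IsPreFibered.exists_isCartesian' f
      haveI : (u ⋙ q).IsStronglyCartesian f χ := inferInstance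
      haveI : q.IsStronglyCartesian f (u.map χ) := hcart χ f inferInstance
      haveI : q.IsHomLift f ψ := hf ▸ inferInstance
      set τ' := Functor.IsStronglyCartesian.map q f (u.map χ) (g := 𝟙 R) (Category.id_comp f).symm ψ with hτ'
      have hd : (u ⋙ q).obj a' = R := IsHomLift.domain_eq (u ⋙ q) f χ
      obtain ⟨τ, hτ⟩ := ((h R).1.full (F := fiberMap (q := q) u rfl R)).map_surjective
        (X := ⟨a, rfl⟩) (Y := ⟨a', hd⟩) ⟨τ', by
          rw [hτ']; exact Functor.IsStronglyCartesian.map_isHomLift q f (u.map χ) (Category.id_comp f).symm ψ⟩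
      refine ⟨τ.1 ≫ χ, ?_⟩
      have : u.map τ.1 = τ' := congrArg Subtype.val hτ
      rw [Functor.map_comp, this, hτ']
      exact Functor.IsStronglyCartesian.fac q f (u.map χ) _ ψ
    have uess : u.EssSurj := ⟨fun b => ⟨(usurj b).choose, ⟨eqToIso (usurj b).choose_spec⟩⟩⟩
    refine ⟨⟨ufaith, ufull, uess⟩, ?_⟩
    -- isofibration
    intro a b f
    set S := q.obj b
    have hga : (u ⋙ q).obj a = q.obj (u.obj a) := rfl
    set g : (u ⋙ q).obj a ≅ S := q.mapIso f with hg
    obtain ⟨a₀, χ, hχ⟩ := Functor.IsPreFibered.exists_isCartesian' g.inv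
    haveI : (u ⋙ q).IsStronglyCartesian g.inv χ := inferInstance
    haveI : IsIso χ := Functor.IsStronglyCartesian.isIso_of_base_isIso (u ⋙ q) g.inv χ
    have hd : (u ⋙ q).obj a₀ = S := IsHomLift.domain_eq (u ⋙ q) g.inv χ
    haveI : q.IsHomLift g.inv (u.map χ) := (homLift_comp_iff u _ _).mp inferInstance
    haveI : q.IsHomLift g.hom f.hom := by
      rw [show g.hom = q.map f.hom from rfl]; infer_instance
    set ζ : u.obj a₀ ⟶ b := u.map χ ≫ f.hom with hζdef
    haveI hζl : q.IsHomLift (𝟙 S) ζ := by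
      have : q.IsHomLift (g.inv ≫ g.hom) ζ := inferInstance
      rwa [g.inv_hom_id] at this
    -- surjectivity in fiber S
    obtain ⟨⟨a', ha'⟩, hab⟩ := (h S).2 ⟨b, rfl⟩
    have hb' : u.obj a' = b := congrArg Subtype.val hab
    -- the fiber morphism
    set m : (fiberMap (q := q) u rfl S).obj ⟨a₀, hd⟩ ⟶ (fiberMap (q := q) u rfl S).obj ⟨a', ha'⟩ :=
      ⟨ζ ≫ eqToHom hb'.symm, by
        haveI : q.IsHomLift (𝟙 S) (eqToHom hb'.symm) :=
          IsHomLift.eqToHom_domain_lift_id (p := q) hb'.symm rfl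
        have : q.IsHomLift (𝟙 S ≫ 𝟙 S) (ζ ≫ eqToHom hb'.symm) := inferInstance
        rwa [Category.comp_id] at this⟩ with hm
    haveI := (h S).1.full (F := fiberMap (q := q) u rfl S)
    haveI := (h S).1.faithful (F := fiberMap (q := q) u rfl S)
    obtain ⟨η, hη⟩ := (fiberMap (q := q) u rfl S).map_surjective m
    have huη : u.map η.1 = ζ ≫ eqToHom hb'.symm := congrArg Subtype.val hη
    haveI : IsIso m := by
      haveI : IsIso m.1 := by
        show IsIso (ζ ≫ eqToHom hb'.symm)
        haveI : IsIso ζ := by rw [hζdef]; infer_instance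
        infer_instance
      exact fiber_isIso m this
    haveI : IsIso ((fiberMap (q := q) u rfl S).map η) := by rw [hη]; infer_instance
    haveI : IsIso η := isIso_of_reflects_iso η (fiberMap (q := q) u rfl S)
    haveI : IsIso η.1 := by
      show IsIso (Functor.Fiber.fiberInclusion.map η)
      exact Functor.map_isIso (Functor.Fiber.fiberInclusion (p := u ⋙ q) (S := S)) η
    refine ⟨a', (asIso χ).symm ≪≫ asIso η.1, hb', ?_⟩
    have huη' : u.map η.1 = ζ ≫ eqToHom hb'.symm := huη
    simp only [Iso.trans_hom, Iso.symm_hom, asIso_inv, asIso_hom, Functor.map_comp,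
      Functor.map_inv, huη', hζdef]
    simp


end PaperStacks
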